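/- Let R be a commutative ring and I, J ideals of R each containing a nonzerodivisor. Then tr(I)·tr(J) ⊆ tr(I·J) ⊆ tr(I) ∩ tr(J). -/

import Mathlib

open nonZeroDivisors

/-- The trace ideal of an `R`-module `M`: the sum of the images of all
`R`-linear maps `M → R`. -/
def traceIdeal (R : Type*) [CommRing R] (M : Type*) [AddCommGroup M] [Module R M] : Ideal R :=
  ⨆ φ : M →ₗ[R] R, LinearMap.range φ

lemma mem_traceIdeal {R : Type*} [CommRing R] {M : Type*} [AddCommGroup M] [Module R M]
    (φ : M →ₗ[R] R) (m : M) : φ m ∈ traceIdeal R M :=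
  (le_iSup (fun ψ : M →ₗ[R] R => LinearMap.range ψ) φ) ⟨m, rfl⟩

/-- left multiplication as map `J → I*J`. -/
def mulLeftMap {R : Type*} [CommRing R] (I J : Ideal R) (a : R) (ha : a ∈ I) :
    J →ₗ[R] ↥(I * J) where
  toFun j := ⟨a * j, Ideal.mul_mem_mul ha j.2⟩
  map_add' x y := by ext; simp [mul_add]
  map_smul' r x := by ext; simp [mul_left_comm]

lemma trace_mul_le_right {R : Type*} [CommRing R] (I J : Ideal R) :
    traceIdeal R ↥(I * J) ≤ traceIdeal R J := by
  refine iSup_le fun θ => ?_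
  rintro _ ⟨x, rfl⟩
  obtain ⟨x, hx⟩ := x
  induction hx using Submodule.mul_induction_on' with
  | mem_mul_mem a ha b hb =>
      have : (⟨a * b, Ideal.mul_mem_mul ha hb⟩ : ↥(I * J)) = mulLeftMap I J a ha ⟨b, hb⟩ := rfl
      rw [this]
      exact mem_traceIdeal (θ ∘ₗ mulLeftMap I J a ha) ⟨b, hb⟩
  | add x hx y hy ihx ihy =>
      have : (⟨x + y, add_mem hx hy⟩ : ↥(I * J)) = ⟨x, hx⟩ + ⟨y, hy⟩ := rfl
      rw [this, map_add]
      exact add_mem ihx ihy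

/-- For ideals `I`, `J` of `R` each containing a nonzerodivisor,
`tr(I)·tr(J) ⊆ tr(I·J) ⊆ tr(I) ∩ tr(J)`. -/
theorem trace_mul_ideals (R : Type*) [CommRing R] (I J : Ideal R)
    (hI : ∃ x ∈ I, x ∈ R⁰) (hJ : ∃ x ∈ J, x ∈ R⁰) :
    traceIdeal R I * traceIdeal R J ≤ traceIdeal R (I * J) ∧
      traceIdeal R (I * J) ≤ traceIdeal R I ⊓ traceIdeal R J := by
  constructor
  · -- tr(I) * tr(J) ≤ tr(I*J)
    rw [Submodule.mul_le]
    intro x hx y hy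
    refine Submodule.iSup_induction (motive := fun x => x * y ∈ traceIdeal R ↥(I * J)) _ hx ?_
      (by simp) (fun a b ha hb => by rw [add_mul]; exact add_mem ha hb)
    rintro φ _ ⟨a, rfl⟩
    refine Submodule.iSup_induction (motive := fun y => φ a * y ∈ traceIdeal R ↥(I * J)) _ hy ?_
      (by simp) (fun c d hc hd => by rw [mul_add]; exact add_mem hc hd)
    rintro ψ _ ⟨b, rfl⟩
    -- φ maps I*J into J
    have key : ∀ x (h : x ∈ I * J), ∃ hI' : x ∈ I, φ ⟨x, hI'⟩ ∈ J := by
      intro x h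
      induction h using Submodule.mul_induction_on' with
      | mem_mul_mem c hc d hd =>
          refine ⟨I.mul_mem_right d hc, ?_⟩
          have : (⟨c * d, I.mul_mem_right d hc⟩ : I) = d • ⟨c, hc⟩ := by
            ext; simp [mul_comm]
          rw [this, map_smul, smul_eq_mul]
          exact J.mul_mem_right _ hd
      | add x hx y hy ihx ihy =>
          obtain ⟨hx', px⟩ := ihx
          obtain ⟨hy', py⟩ := ihy
          refine ⟨add_mem hx' hy', ?_⟩
          have : (⟨x + y, add_mem hx' hy'⟩ : I) = ⟨x, hx'⟩ + ⟨y, hy'⟩ := rfl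
          rw [this, map_add]
          exact add_mem px py
    set f : ↥(I * J) →ₗ[R] ↥I := Submodule.inclusion (Ideal.mul_le_left (I := I) (J := J))
    have hf : ∀ z : ↥(I * J), φ (f z) ∈ J := by
      rintro ⟨z, hz⟩
      obtain ⟨hz', pz⟩ := key z hz
      exact pz
    set θ : ↥(I * J) →ₗ[R] R := ψ ∘ₗ LinearMap.codRestrict J (φ ∘ₗ f) hf
    have hab : ((a : R) * b) ∈ I * J := Ideal.mul_mem_mul a.2 b.2
    have : φ a * ψ b = θ ⟨a * b, hab⟩ := by
      show φ a * ψ b = ψ ⟨φ (f ⟨a * b, hab⟩), _⟩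
      have h1 : f ⟨(a : R) * b, hab⟩ = (b : R) • a := by ext; simp [f, Submodule.coe_inclusion, mul_comm]
      have h2 : (⟨φ (f ⟨(a : R) * b, hab⟩), hf _⟩ : J) = φ a • b := by
        ext; simp [h1, mul_comm]
      rw [h2, map_smul, smul_eq_mul]
    rw [this]
    exact mem_traceIdeal θ _
  · refine le_inf ?_ (trace_mul_le_right I J)
    rw [mul_comm I J]
    exact trace_mul_le_right J I
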